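/- arXiv:2605.03867 — 2 statements merged into one kernel-verified Lean document; each statement's English description precedes it below -/
import Mathlib

section
/- Let d ≥ 1 and n ≥ 2 be integers, and let G be a random n×d matrix whose entries are independent Gaussian random variables with mean 0 and variance 1/n, with rows g_1,…,g_n. Then E[ max_{1 ≤ i ≤ n} ‖g_i‖ ] ≤ sqrt( (4 ln n + 4 sqrt(d ln n) + 2d) / (2n) ) + 1 / sqrt(2 n ln n). -/
open MeasureTheory ProbabilityTheory Real
open scoped NNReal ENNReal

noncomputable section

lemma my_log_ineq {v : ℝ} (hv : 0 ≤ v) : (1 + v) * Real.log (1 + v) ≤ v + v ^ 2 / 2 := by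
  set f : ℝ → ℝ := fun y => y + y ^ 2 / 2 - (1 + y) * Real.log (1 + y) with hf
  have hder : ∀ x ∈ Set.Ioi (0:ℝ), 0 ≤ deriv f x := by
    intro x hx
    have hx0 : (0:ℝ) < x := hx
    have h1x : (1:ℝ) + x ≠ 0 := by positivity
    have hd : HasDerivAt f (x - Real.log (1 + x)) x := by
      have h1 : HasDerivAt (fun y : ℝ => 1 + y) 1 x := (hasDerivAt_id x).const_add 1
      have h2 : HasDerivAt (fun y : ℝ => Real.log (1 + y)) (1 / (1 + x)) x := h1.log h1x
      have h3 : HasDerivAt (fun y : ℝ => (1 + y) * Real.log (1 + y))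
          (1 * Real.log (1 + x) + (1 + x) * (1 / (1 + x))) x := h1.mul h2
      have h4 : HasDerivAt (fun y : ℝ => y + y ^ 2 / 2) (1 + x) x := by
        have := ((hasDerivAt_pow 2 x).div_const 2).const_add x
        exact ((hasDerivAt_id' x).add ((hasDerivAt_pow 2 x).div_const 2)).congr_deriv (by norm_num)
      have := h4.sub h3
      refine this.congr_deriv ?_
      rw [mul_one_div_cancel h1x]
      ring
    rw [hd.deriv]
    have : Real.log (1 + x) ≤ x := by
      have := Real.log_le_sub_one_of_pos (by positivity : (0:ℝ) < 1 + x)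
      linarith
    linarith
  have hcont : ContinuousOn f (Set.Ici 0) := by
    apply ContinuousOn.sub
    · fun_prop
    · apply ContinuousOn.mul (by fun_prop)
      apply ContinuousOn.log (by fun_prop)
      intro x hx
      have : (0:ℝ) ≤ x := hx
      positivity
  have hmono : MonotoneOn f (Set.Ici 0) := by
    apply monotoneOn_of_deriv_nonneg (convex_Ici 0) hcont
    · rw [interior_Ici]
      intro x hx
      have hd := hder x hx
      -- differentiability on interior
      have hx0 : (0:ℝ) < x := hx
      have h1x : (1:ℝ) + x ≠ 0 := by positivity
      have h1 : HasDerivAt (fun y : ℝ => 1 + y) 1 x := (hasDerivAt_id x).const_add 1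
      have h2 : HasDerivAt (fun y : ℝ => Real.log (1 + y)) (1 / (1 + x)) x := h1.log h1x
      exact (((hasDerivAt_id x).add ((hasDerivAt_pow 2 x).div_const 2)).sub
        (h1.mul h2)).differentiableAt.differentiableWithinAt
    · rw [interior_Ici]; exact hder
  have h0 : f 0 ≤ f v := hmono (by simp) (by exact hv) hv
  have hf0 : f 0 = 0 := by simp [hf]
  simp only [hf] at h0 hf0
  linarith


lemma gaussian_exp_sq_integral {v : ℝ≥0} (hv : v ≠ 0) {t : ℝ} (ht : 2 * t * (v:ℝ) < 1) :
    Integrable (fun x => Real.exp (t * x ^ 2)) (gaussianReal 0 v) ∧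
      ∫ x, Real.exp (t * x ^ 2) ∂gaussianReal 0 v = (Real.sqrt (1 - 2 * t * (v:ℝ)))⁻¹ := by
  have hv0 : (0:ℝ) < v := lt_of_le_of_ne (NNReal.coe_nonneg v) (by exact_mod_cast (Ne.symm hv))
  set b : ℝ := (2 * (v:ℝ))⁻¹ - t with hb
  have hbpos : 0 < b := by
    have : t < 1 / (2 * (v:ℝ)) := by
      rw [lt_div_iff₀ (by positivity : (0:ℝ) < 2 * (v:ℝ))]
      nlinarith
    rw [hb, sub_pos, ← one_div]
    exact this
  have h2vb : 2 * (v:ℝ) * b = 1 - 2 * t * v := by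
    rw [hb]; field_simp
  have hmeas : Measurable (fun x => (gaussianPDFReal 0 v x).toNNReal) :=
    (measurable_gaussianPDFReal 0 v).real_toNNReal
  have hdens : gaussianReal 0 v
      = volume.withDensity (fun x => ((gaussianPDFReal 0 v x).toNNReal : ℝ≥0∞)) := by
    rw [gaussianReal_of_var_ne_zero _ hv]
    rfl
  have hsmul : (fun x : ℝ => (gaussianPDFReal 0 v x).toNNReal • Real.exp (t * x ^ 2))
      = fun x : ℝ => (Real.sqrt (2 * π * v))⁻¹ * Real.exp (-b * x ^ 2) := by
    funext x
    rw [NNReal.smul_def, smul_eq_mul, Real.coe_toNNReal _ (gaussianPDFReal_nonneg 0 v x), gaussianPDFReal,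
      mul_assoc, ← Real.exp_add]
    congr 2
    rw [hb]
    field_simp
    ring
  constructor
  · rw [hdens, integrable_withDensity_iff_integrable_smul hmeas]
    have : Integrable (fun x => (Real.sqrt (2 * π * v))⁻¹ * Real.exp (-b * x ^ 2)) volume :=
      (integrable_exp_neg_mul_sq hbpos).const_mul _
    exact this.congr (Filter.Eventually.of_forall fun x => (congrFun hsmul x).symm)
  · rw [hdens, integral_withDensity_eq_integral_smul hmeas, hsmul, integral_const_mul,
      integral_gaussian, ← h2vb]
    have hπ : (0:ℝ) < π := Real.pi_pos
    rw [← Real.sqrt_inv (2 * π * v), ← Real.sqrt_mul (by positivity) (π / b)]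
    rw [show (2 * π * (v:ℝ))⁻¹ * (π / b) = (2 * (v:ℝ) * b)⁻¹ by field_simp]
    rw [Real.sqrt_inv]


set_option maxHeartbeats 1000000 in
lemma scalar_key {p q : ℝ} (hp : 0 < p) (hq : 0 < q) :
    p ^ 2 + q ^ 2 * (Real.log (1 + 2 * p / q) / 2)
      ≤ p / (q + 2 * p) * (q ^ 2 + 2 * q * p + 2 * p ^ 2) := by
  have hqp : 0 < q + 2 * p := by linarith
  have hlog := my_log_ineq (show (0:ℝ) ≤ 2 * p / q by positivity)
  set lg := Real.log (1 + 2 * p / q) with hlg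
  have hsc := mul_le_mul_of_nonneg_left hlog (sq_nonneg q)
  have e1 : q ^ 2 * ((1 + 2 * p / q) * lg) = q * (q + 2 * p) * lg := by field_simp
  have e2 : q ^ 2 * (2 * p / q + (2 * p / q) ^ 2 / 2) = 2 * p * q + 2 * p ^ 2 := by
    field_simp
  rw [e1, e2] at hsc
  rw [div_mul_eq_mul_div, le_div_iff₀ hqp]
  nlinarith [mul_le_mul_of_nonneg_left hsc (show (0:ℝ) ≤ q / 2 by positivity)]

lemma scalar_c {p q : ℝ} (hp : 0 < p) (hq : 0 < q) :
    2 * p ^ 2 ≤ 4 * (p / (q + 2 * p)) ^ 2 * (q ^ 2 + 2 * q * p + 2 * p ^ 2) := by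
  have hqp : 0 < q + 2 * p := by linarith
  have he : 4 * (p / (q + 2 * p)) ^ 2 * (q ^ 2 + 2 * q * p + 2 * p ^ 2)
      = p ^ 2 * (4 * (q ^ 2 + 2 * q * p + 2 * p ^ 2)) / (q + 2 * p) ^ 2 := by
    field_simp
  rw [he, le_div_iff₀ (by positivity)]
  nlinarith [sq_nonneg (p * q)]

set_option maxHeartbeats 1000000 in
/-- **Expected maximal row norm of a Gaussian matrix.**
Let `G` be a random `n × d` matrix whose entries are i.i.d. `N(0, 1/n)` Gaussian random
variables (modeled as the product measure over all entries of `gaussianReal 0 (1/n)`).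
Then `E[max_{1 ≤ i ≤ n} ‖g_i‖] ≤ √((4 ln n + 4√(d ln n) + 2d)/(2n)) + 1/√(2n ln n)`,
where `g_i` denotes the `i`-th row of `G`. -/
theorem gaussian_expected_max_row_norm
    (d n : ℕ) (hd : 1 ≤ d) (hn : 2 ≤ n) :
    (∫ G : Fin n → Fin d → ℝ,
        (⨆ i : Fin n, Real.sqrt (∑ j : Fin d, (G i j) ^ 2))
        ∂(Measure.pi fun _ : Fin n =>
            Measure.pi fun _ : Fin d => gaussianReal 0 ((n : NNReal))⁻¹))
      ≤ Real.sqrt ((4 * Real.log n + 4 * Real.sqrt (d * Real.log n) + 2 * d) / (2 * n))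
          + 1 / Real.sqrt (2 * n * Real.log n) := by
  haveI : Nonempty (Fin n) := ⟨⟨0, by omega⟩⟩
  letI : MeasureSpace ℝ := ⟨gaussianReal 0 ((n : NNReal))⁻¹⟩
  haveI : IsProbabilityMeasure (volume : Measure ℝ) :=
    inferInstanceAs (IsProbabilityMeasure (gaussianReal 0 ((n : NNReal))⁻¹))
  haveI : IsProbabilityMeasure (volume : Measure (Fin d → ℝ)) :=
    inferInstanceAs (IsProbabilityMeasure (Measure.pi fun _ : Fin d => volume))
  haveI : IsProbabilityMeasure (volume : Measure (Fin n → Fin d → ℝ)) :=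
    inferInstanceAs (IsProbabilityMeasure (Measure.pi fun _ : Fin n => volume))
  have hvol : (Measure.pi fun _ : Fin n =>
      Measure.pi fun _ : Fin d => gaussianReal 0 ((n : NNReal))⁻¹)
      = (volume : Measure (Fin n → Fin d → ℝ)) := rfl
  rw [hvol]
  -- real quantities
  set N : ℝ := (n : ℝ) with hNdef
  set D : ℝ := (d : ℝ) with hDdef
  have hN : (2:ℝ) ≤ N := by rw [hNdef]; exact_mod_cast hn
  have hD : (1:ℝ) ≤ D := by rw [hDdef]; exact_mod_cast hd
  have hN0 : (0:ℝ) < N := by linarith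
  set L : ℝ := Real.log N with hLdef
  have hL : 0 < L := Real.log_pos (by linarith)
  set p : ℝ := Real.sqrt L with hpdef
  set q : ℝ := Real.sqrt D with hqdef
  have hp : 0 < p := Real.sqrt_pos.2 hL
  have hq : 0 < q := Real.sqrt_pos.2 (by linarith)
  have hp2 : p ^ 2 = L := Real.sq_sqrt hL.le
  have hq2 : q ^ 2 = D := Real.sq_sqrt (by linarith)
  have hqp : 0 < q + 2 * p := by linarith
  set lam : ℝ := p / (q + 2 * p) with hlamdef
  have hlam : 0 < lam := div_pos hp hqp
  have hlam2 : 2 * lam < 1 := by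
    rw [hlamdef, mul_div_assoc']
    exact (div_lt_one hqp).2 (by linarith)
  set t : ℝ := lam * N with htdef
  have ht : 0 < t := mul_pos hlam hN0
  set A2 : ℝ := (D + 2 * q * p + 2 * L) / N with hA2def
  have hA2 : 0 < A2 := by positivity
  have hNA2 : N * A2 = D + 2 * q * p + 2 * L := by
    rw [hA2def]; field_simp
  set a : ℝ := Real.sqrt A2 with hadef
  have ha : 0 < a := Real.sqrt_pos.2 hA2
  have ha2 : a ^ 2 = A2 := Real.sq_sqrt hA2.le
  set c : ℝ := 2 * t * a with hcdef
  have hc : 0 < c := by positivity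
  -- gaussian mgf
  have hvne : ((n : NNReal))⁻¹ ≠ 0 := by
    simp only [ne_eq, inv_eq_zero, Nat.cast_eq_zero]
    omega
  have hvcast : ((((n : NNReal))⁻¹ : NNReal) : ℝ) = N⁻¹ := by
    rw [NNReal.coe_inv, NNReal.coe_natCast, hNdef]
  have h2tv : 2 * t * ((((n : NNReal))⁻¹ : NNReal) : ℝ) = 2 * lam := by
    rw [hvcast, htdef]
    field_simp
  have hmgf := gaussian_exp_sq_integral hvne (t := t) (by rw [h2tv]; exact hlam2)
  set M : ℝ := (Real.sqrt (1 - 2 * lam))⁻¹ with hMdef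
  have hInt1 : Integrable (fun x => Real.exp (t * x ^ 2)) (volume : Measure ℝ) := hmgf.1
  have hI1 : ∫ x, Real.exp (t * x ^ 2) ∂(volume : Measure ℝ) = M := by
    rw [show (volume : Measure ℝ) = gaussianReal 0 ((n : NNReal))⁻¹ from rfl, hmgf.2, h2tv]
  have hM : 0 < M := by
    rw [hMdef]
    have : 0 < 1 - 2 * lam := by linarith
    positivity
  -- row level
  have hrow_eq : (fun y : Fin d → ℝ => Real.exp (t * ∑ j, (y j) ^ 2))
      = fun y => ∏ j, Real.exp (t * (y j) ^ 2) := by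
    funext y
    rw [Finset.mul_sum, Real.exp_sum]
  have Hrow : Integrable (fun y : Fin d → ℝ => Real.exp (t * ∑ j, (y j) ^ 2))
      (volume : Measure (Fin d → ℝ)) := by
    rw [hrow_eq]
    exact Integrable.fintype_prod (f := fun _ x => Real.exp (t * x ^ 2)) (fun _ => hInt1)
  have Irow : ∫ y : Fin d → ℝ, Real.exp (t * ∑ j, (y j) ^ 2) = M ^ d := by
    rw [hrow_eq, volume_pi, integral_fintype_prod_eq_pow (ι := Fin d) (fun x : ℝ => Real.exp (t * x ^ 2)), hI1]
    simp
  -- full level, per row i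
  have Hfull : ∀ i : Fin n, Integrable
      (fun G : Fin n → Fin d → ℝ => Real.exp (t * ∑ j, (G i j) ^ 2))
      (volume : Measure (Fin n → Fin d → ℝ)) := by
    intro i
    have hfe : (fun G : Fin n → Fin d → ℝ => Real.exp (t * ∑ j, (G i j) ^ 2))
        = fun G => ∏ i', (if i' = i then (fun y : Fin d → ℝ => Real.exp (t * ∑ j, (y j) ^ 2))
            else fun _ => 1) (G i') := by
      funext G
      rw [Finset.prod_eq_single i (fun b _ hb => by simp [hb]) (by simp)]
      simp
    rw [hfe]
    refine Integrable.fintype_prod (fun i' => ?_)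
    by_cases h : i' = i
    · simpa [h] using Hrow
    · simpa [h] using (integrable_const (1:ℝ) : Integrable _ (volume : Measure (Fin d → ℝ)))
  have Ifull : ∀ i : Fin n,
      (∫ G : Fin n → Fin d → ℝ, Real.exp (t * ∑ j, (G i j) ^ 2)) = M ^ d := by
    intro i
    have hfe : (fun G : Fin n → Fin d → ℝ => Real.exp (t * ∑ j, (G i j) ^ 2))
        = fun G => ∏ i', (if i' = i then (fun y : Fin d → ℝ => Real.exp (t * ∑ j, (y j) ^ 2))
            else fun _ => 1) (G i') := by
      funext G
      rw [Finset.prod_eq_single i (fun b _ hb => by simp [hb]) (by simp)]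
      simp
    rw [hfe, volume_pi, integral_fintype_prod_eq_prod (ι := Fin n)
      (f := fun i' => (if i' = i then (fun y : Fin d → ℝ => Real.exp (t * ∑ j, (y j) ^ 2))
            else fun _ => 1))]
    rw [Finset.prod_eq_single i (fun b _ hb => by simp [hb]) (by simp)]
    simpa using Irow
  -- the dominating function
  set C : ℝ := Real.exp (-(t * A2)) / c with hCdef
  set W : (Fin n → Fin d → ℝ) → ℝ :=
    fun G => a + C * ∑ i, Real.exp (t * ∑ j, (G i j) ^ 2) with hWdef
  have HWint : Integrable W (volume : Measure (Fin n → Fin d → ℝ)) := by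
    refine (integrable_const a).add ?_
    exact (integrable_finset_sum _ (fun i _ => Hfull i)).const_mul C
  -- pointwise bound
  have Hpoint : ∀ G : Fin n → Fin d → ℝ,
      (⨆ i : Fin n, Real.sqrt (∑ j : Fin d, (G i j) ^ 2)) ≤ W G := by
    intro G
    apply ciSup_le
    intro i
    set S : Fin n → ℝ := fun i' => ∑ j, (G i' j) ^ 2 with hSdef
    have hS : ∀ i', 0 ≤ S i' := fun i' => Finset.sum_nonneg fun j _ => sq_nonneg _
    have hsq : (Real.sqrt (S i)) ^ 2 = S i := Real.sq_sqrt (hS i)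
    set y : ℝ := Real.sqrt (S i) with hydef
    have h1 : c * (y - a) ≤ t * S i - t * A2 := by
      have heq : t * S i - t * A2 - c * (y - a) = t * (y - a) ^ 2 := by
        rw [← hsq, ← ha2, hcdef]; ring
      have hnn : 0 ≤ t * (y - a) ^ 2 := by positivity
      linarith
    have h2 : y ≤ a + Real.exp (c * (y - a)) / c := by
      have hxe : c * (y - a) ≤ Real.exp (c * (y - a)) := by
        linarith [Real.add_one_le_exp (c * (y - a)), Real.exp_pos (c * (y-a))]
      rw [← sub_le_iff_le_add']
      rw [le_div_iff₀ hc]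
      linarith [hxe]
    have h3 : Real.exp (c * (y - a)) ≤ Real.exp (-(t * A2)) * ∑ i', Real.exp (t * S i') := by
      calc Real.exp (c * (y - a)) ≤ Real.exp (t * S i - t * A2) := Real.exp_le_exp.2 h1
        _ = Real.exp (-(t * A2)) * Real.exp (t * S i) := by
            rw [← Real.exp_add]; congr 1; ring
        _ ≤ _ := by
            refine mul_le_mul_of_nonneg_left ?_ (Real.exp_pos (-(t * A2))).le
            exact Finset.single_le_sum (f := fun i' => Real.exp (t * S i'))
              (fun i' _ => (Real.exp_pos _).le) (Finset.mem_univ i)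
    calc y ≤ a + Real.exp (c * (y - a)) / c := h2
      _ ≤ a + (Real.exp (-(t * A2)) * ∑ i', Real.exp (t * S i')) / c := by
          gcongr
      _ = W G := by
          rw [hWdef, hCdef]
          ring
  -- integrate
  have hWint_eq : ∫ G : Fin n → Fin d → ℝ, W G = a + C * (N * M ^ d) := by
    rw [hWdef]
    rw [integral_add (integrable_const a)
      ((integrable_finset_sum _ (fun i _ => Hfull i)).const_mul C)]
    rw [integral_const]
    rw [integral_const_mul, integral_finset_sum _ (fun i _ => Hfull i)]
    simp_rw [Ifull]
    rw [Finset.sum_const, Finset.card_univ, Fintype.card_fin, nsmul_eq_mul, probReal_univ,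
      one_smul]
  have hmain : (∫ G : Fin n → Fin d → ℝ,
      (⨆ i : Fin n, Real.sqrt (∑ j : Fin d, (G i j) ^ 2))) ≤ a + C * (N * M ^ d) := by
    rw [← hWint_eq]
    refine integral_mono_of_nonneg (ae_of_all _ ?_) HWint (ae_of_all _ Hpoint)
    intro G
    exact Real.iSup_nonneg (fun i => Real.sqrt_nonneg _)
  -- key scalar inequality: n * M^d * exp (-(t*A2)) ≤ 1
  have hkey : Real.exp (-(t * A2)) * (N * M ^ d) ≤ 1 := by
    have h12l : 0 < 1 - 2 * lam := by linarith
    have hlogM : Real.log M = -(Real.log (1 - 2 * lam) / 2) := by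
      rw [hMdef, Real.log_inv, Real.log_sqrt h12l.le]
    have hMd : Real.exp (D * Real.log M) = M ^ d := by
      rw [hDdef, Real.exp_nat_mul, Real.exp_log hM]
    have hNe : Real.exp L = N := Real.exp_log hN0
    have htA2 : t * A2 = lam * (D + 2 * q * p + 2 * L) := by
      rw [htdef, mul_assoc, hNA2]
    have h1m2lam : 1 - 2 * lam = q / (q + 2 * p) := by
      rw [hlamdef]; field_simp; ring
    set lg : ℝ := Real.log (1 + 2 * p / q) with hlgdef
    have hlogeq : Real.log (1 - 2 * lam) = -lg := by
      rw [h1m2lam, hlgdef, ← Real.log_inv]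
      congr 1
      rw [inv_eq_one_div]
      rw [div_eq_div_iff hqp.ne' (by positivity : (1 + 2 * p / q) ≠ 0)]
      field_simp
    have hscal : L + D * Real.log M - t * A2 ≤ 0 := by
      rw [hlogM, hlogeq, htA2, ← hp2, ← hq2]
      have hk : p ^ 2 + q ^ 2 * (lg / 2) ≤ lam * (q ^ 2 + 2 * q * p + 2 * p ^ 2) := by
        rw [hlamdef, hlgdef]
        exact scalar_key hp hq
      linarith
    calc Real.exp (-(t * A2)) * (N * M ^ d)
        = Real.exp (-(t * A2)) * (Real.exp L * Real.exp (D * Real.log M)) := by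
          rw [hMd, hNe]
      _ = Real.exp (L + D * Real.log M - t * A2) := by
          rw [← Real.exp_add, ← Real.exp_add]
          congr 1
          ring
      _ ≤ 1 := Real.exp_le_one_iff.2 hscal
  have hCa : C * (N * M ^ d) ≤ 1 / c := by
    rw [hCdef, div_mul_eq_mul_div, div_le_div_iff₀ hc hc]
    calc Real.exp (-(t * A2)) * (N * M ^ d) * c ≤ 1 * c :=
          mul_le_mul_of_nonneg_right hkey hc.le
      _ = 1 * c := rfl
  -- c ≥ sqrt (2 N L)
  have hcge : Real.sqrt (2 * N * L) ≤ c := by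
    rw [show c = Real.sqrt (c ^ 2) from (Real.sqrt_sq hc.le).symm]
    apply Real.sqrt_le_sqrt
    have hc2 : c ^ 2 = 4 * lam ^ 2 * N * (q ^ 2 + 2 * q * p + 2 * p ^ 2) := by
      rw [hcdef, htdef, show (2 * (lam * N) * a) ^ 2 = 4 * lam ^ 2 * N * (N * a ^ 2) by ring,
        ha2, hNA2, ← hp2, ← hq2]
    have hineq : 2 * p ^ 2 ≤ 4 * lam ^ 2 * (q ^ 2 + 2 * q * p + 2 * p ^ 2) := by
      rw [hlamdef]
      exact scalar_c hp hq
    rw [hc2, ← hp2]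
    calc 2 * N * p ^ 2 = N * (2 * p ^ 2) := by ring
      _ ≤ N * (4 * lam ^ 2 * (q ^ 2 + 2 * q * p + 2 * p ^ 2)) :=
          mul_le_mul_of_nonneg_left hineq hN0.le
      _ = 4 * lam ^ 2 * N * (q ^ 2 + 2 * q * p + 2 * p ^ 2) := by ring
  have hfinal2 : (1:ℝ) / c ≤ 1 / Real.sqrt (2 * N * L) := by
    apply one_div_le_one_div_of_le
    · apply Real.sqrt_pos.2; positivity
    · exact hcge
  -- identify a with the first term
  have hafirst : a = Real.sqrt ((4 * L + 4 * Real.sqrt (D * L) + 2 * D) / (2 * N)) := by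
    rw [hadef]
    congr 1
    rw [Real.sqrt_mul (by linarith : (0:ℝ) ≤ D), ← hqdef, ← hpdef, hA2def]
    field_simp
    ring
  calc (∫ G : Fin n → Fin d → ℝ, ⨆ i : Fin n, Real.sqrt (∑ j : Fin d, (G i j) ^ 2))
      ≤ a + C * (N * M ^ d) := hmain
    _ ≤ a + 1 / c := by linarith [hCa]
    _ ≤ a + 1 / Real.sqrt (2 * N * L) := by linarith [hfinal2]
    _ = _ := by rw [hafirst]
end
end

section
/- Let ε ∈ (0,1) and let k ≥ 1 be a real number. Then ( (1+ε)^{k+1} − (1−ε)^{k+1} ) / ( (1+ε)^{k} − (1−ε)^{k} ) ≤ (1+ε) + (1−ε)/k. -/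
open Real

/-- **An elementary ratio inequality.**
For `ε ∈ (0,1)` and a real number `k ≥ 1`,
`((1+ε)^{k+1} - (1-ε)^{k+1}) / ((1+ε)^k - (1-ε)^k) ≤ (1+ε) + (1-ε)/k`. -/
theorem ratio_power_bound (ε k : ℝ) (hε : ε ∈ Set.Ioo (0 : ℝ) 1) (hk : 1 ≤ k) :
    ((1 + ε) ^ (k + 1) - (1 - ε) ^ (k + 1)) / ((1 + ε) ^ k - (1 - ε) ^ k)
      ≤ (1 + ε) + (1 - ε) / k := by
  obtain ⟨hε0, hε1⟩ := hε
  set a : ℝ := 1 + ε with ha_def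
  set b : ℝ := 1 - ε with hb_def
  have ha : (0:ℝ) < a := by simp [ha_def]; linarith
  have hb : (0:ℝ) < b := by simp [hb_def]; linarith
  have hab : b < a := by simp [ha_def, hb_def]; linarith
  have hk0 : (0:ℝ) < k := by linarith
  have hden : (0:ℝ) < a ^ k - b ^ k := by
    have := Real.rpow_lt_rpow hb.le hab hk0
    linarith
  -- Bernoulli: (1 + s)^k ≥ 1 + k s with s = a/b - 1
  have hBern : 1 + k * (a / b - 1) ≤ (1 + (a / b - 1)) ^ k :=
    one_add_mul_self_le_rpow_one_add (by have := div_pos ha hb; linarith) hk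
  have hdiv : (1 + (a / b - 1)) ^ k = a ^ k / b ^ k := by
    rw [show 1 + (a / b - 1) = a / b by ring, Real.div_rpow ha.le hb.le]
  have hbk : (0:ℝ) < b ^ k := Real.rpow_pos_of_pos hb k
  have hkey : b ^ k * b + k * b ^ k * (a - b) ≤ a ^ k * b := by
    rw [hdiv] at hBern
    have := mul_le_mul_of_nonneg_right hBern (by positivity : (0:ℝ) ≤ b ^ k * b)
    calc b ^ k * b + k * b ^ k * (a - b)
        = (1 + k * (a / b - 1)) * (b ^ k * b) := by field_simp
      _ ≤ a ^ k / b ^ k * (b ^ k * b) := this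
      _ = a ^ k * b := by field_simp
  have ha1 : a ^ (k + 1) = a ^ k * a := by
    rw [Real.rpow_add ha, Real.rpow_one]
  have hb1 : b ^ (k + 1) = b ^ k * b := by
    rw [Real.rpow_add hb, Real.rpow_one]
  rw [div_le_iff₀ hden, ha1, hb1]
  have hexp : (a + b / k) * (a ^ k - b ^ k)
      = a ^ k * a - a * b ^ k + (b * a ^ k - b * b ^ k) / k := by
    field_simp
  rw [hexp]
  have h2 : (a * b ^ k - b ^ k * b) * k ≤ b * a ^ k - b * b ^ k := by nlinarith [hkey]
  have h3 : a * b ^ k - b ^ k * b ≤ (b * a ^ k - b * b ^ k) / k := (le_div_iff₀ hk0).2 h2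
  linarith
end
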